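/- Let k > 0 and define g : (0,∞)³ → ℝ by g(λ₁, λ₂, λ₃) = exp((k/3)·[(log λ₁ − log λ₂)² + (log λ₂ − log λ₃)² + (log λ₃ − log λ₁)²]). Then g is separately convex (convex in each variable λᵢ with the other two fixed) on all of (0,∞)³ if and only if k ≥ 3/16. -/

import Mathlib

open Real Set Filter

/-- first derivative -/
lemma keyDeriv (a b c : ℝ) {l : ℝ} (hl : 0 < l) :
    HasDerivAt (fun x : ℝ => Real.exp (a * (Real.log x)^2 + b * Real.log x + c))
      (Real.exp (a * (Real.log l)^2 + b * Real.log l + c) * (2*a*Real.log l + b) / l) l := by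
  have hlog := Real.hasDerivAt_log hl.ne'
  have h1 : HasDerivAt (fun x : ℝ => a * (Real.log x)^2 + b * Real.log x + c)
      ((2*a*Real.log l + b) / l) l := by
    have := (((hlog.pow 2).const_mul a).add (hlog.const_mul b)).add_const c
    refine this.congr_deriv ?_
    field_simp
    ring
  have := h1.exp
  convert this using 1
  rw [mul_div_assoc]

/-- second derivative -/
lemma keyDeriv2 (a b c : ℝ) {l : ℝ} (hl : 0 < l) :
    HasDerivAt (fun x : ℝ =>
        Real.exp (a * (Real.log x)^2 + b * Real.log x + c) * (2*a*Real.log x + b) / x)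
      (Real.exp (a * (Real.log l)^2 + b * Real.log l + c) *
        ((2*a*Real.log l + b)^2 + 2*a - (2*a*Real.log l + b)) / l^2) l := by
  have hlog := Real.hasDerivAt_log hl.ne'
  have hlin : HasDerivAt (fun x : ℝ => 2*a*Real.log x + b) (2*a/l) l := by
    have := (hlog.const_mul (2*a)).add_const b
    exact this.congr_deriv (div_eq_mul_inv _ _).symm
  have hprod := (keyDeriv a b c hl).mul hlin
  have hdiv := hprod.div (hasDerivAt_id l) hl.ne'
  simp only [id_eq, mul_one, Pi.mul_apply] at hdiv
  refine hdiv.congr_deriv ?_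
  field_simp

lemma convexQ (a b c : ℝ) (ha : 1/4 ≤ 2*a) :
    ConvexOn ℝ (Set.Ioi (0:ℝ)) (fun l : ℝ => Real.exp (a * (Real.log l)^2 + b * Real.log l + c)) := by
  have hint : interior (Set.Ioi (0:ℝ)) = Set.Ioi 0 := interior_Ioi
  apply convexOn_of_hasDerivWithinAt2_nonneg (convex_Ioi 0)
    (f' := fun l : ℝ => Real.exp (a * (Real.log l)^2 + b * Real.log l + c) * (2*a*Real.log l + b) / l)
    (f'' := fun l : ℝ => Real.exp (a * (Real.log l)^2 + b * Real.log l + c) *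
        ((2*a*Real.log l + b)^2 + 2*a - (2*a*Real.log l + b)) / l^2)
  · exact fun x hx => ((keyDeriv a b c hx).differentiableAt).continuousAt.continuousWithinAt
  · rw [hint]; exact fun x hx => (keyDeriv a b c hx).hasDerivWithinAt
  · rw [hint]; exact fun x hx => (keyDeriv2 a b c hx).hasDerivWithinAt
  · rw [hint]
    intro x hx
    apply div_nonneg _ (sq_nonneg x)
    apply mul_nonneg (Real.exp_pos _).le
    nlinarith [sq_nonneg (2*a*Real.log x + b - 1/2)]

lemma monoOn_deriv_nonneg {G : ℝ → ℝ} {d l : ℝ} (hl : (0:ℝ) < l)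
    (hm : MonotoneOn G (Set.Ioi 0)) (hd : HasDerivAt G d l) : 0 ≤ d := by
  have htend : Filter.Tendsto (slope G l) (nhdsWithin l (Set.Ioi l)) (nhds d) :=
    (hasDerivAt_iff_tendsto_slope.1 hd).mono_left
      (nhdsWithin_mono l (fun x hx => ne_of_gt hx))
  refine ge_of_tendsto htend ?_
  filter_upwards [self_mem_nhdsWithin] with x hx
  have hx1 : l < x := hx
  have hGle : G l ≤ G x := hm hl (lt_trans hl hx1) hx1.le
  rw [slope_def_field]
  exact div_nonneg (sub_nonneg.2 hGle) (sub_nonneg.2 hx1.le)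

lemma key_nec (a b c : ℝ) (ha : 0 < a)
    (hconv : ConvexOn ℝ (Set.Ioi (0:ℝ))
      (fun l : ℝ => Real.exp (a * (Real.log l)^2 + b * Real.log l + c))) :
    1/4 ≤ 2*a := by
  set F : ℝ → ℝ := fun l : ℝ => Real.exp (a * (Real.log l)^2 + b * Real.log l + c) with hF
  have hmono : MonotoneOn (deriv F) (Set.Ioi 0) :=
    hconv.monotoneOn_deriv (fun x hx => (keyDeriv a b c hx).differentiableAt)
  set l₀ : ℝ := Real.exp ((1/2 - b)/(2*a)) with hl₀def
  have hl₀ : (0:ℝ) < l₀ := Real.exp_pos _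
  have heq : (deriv F) =ᶠ[nhds l₀] (fun l : ℝ =>
      Real.exp (a * (Real.log l)^2 + b * Real.log l + c) * (2*a*Real.log l + b) / l) := by
    filter_upwards [isOpen_Ioi.mem_nhds hl₀] with x hx
    exact (keyDeriv a b c hx).deriv
  have hd2 : HasDerivAt (deriv F)
      (Real.exp (a * (Real.log l₀)^2 + b * Real.log l₀ + c) *
        ((2*a*Real.log l₀ + b)^2 + 2*a - (2*a*Real.log l₀ + b)) / l₀^2) l₀ :=
    (keyDeriv2 a b c hl₀).congr_of_eventuallyEq heq
  have h0 := monoOn_deriv_nonneg hl₀ hmono hd2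
  have hs : 2*a*Real.log l₀ + b = 1/2 := by
    rw [hl₀def, Real.log_exp]; field_simp; ring
  rw [hs] at h0
  have h1 : 0 ≤ Real.exp (a * (Real.log l₀)^2 + b * Real.log l₀ + c) *
      ((1/2:ℝ)^2 + 2*a - 1/2) := by
    have h2 := mul_nonneg h0 (sq_nonneg l₀)
    rwa [div_mul_cancel₀] at h2
    exact pow_ne_zero 2 hl₀.ne'
  nlinarith [Real.exp_pos (a * (Real.log l₀)^2 + b * Real.log l₀ + c)]

lemma convexCase (k A B : ℝ) (hk : 3/16 ≤ k) :
    ConvexOn ℝ (Set.Ioi (0:ℝ)) (fun l : ℝ =>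
      Real.exp (k / 3 * ((Real.log l - A) ^ 2 + (A - B) ^ 2 + (B - Real.log l) ^ 2))) := by
  have h := convexQ (2*k/3) (-(2*k/3)*(A+B)) (k/3*(A-B)^2 + k/3*A^2 + k/3*B^2)
    (by linarith)
  convert h using 2 with l
  ring

theorem threeDim_g_separatelyConvex_iff (k : ℝ) (hk : 0 < k) :
    ((∀ l2 l3 : ℝ, 0 < l2 → 0 < l3 →
        ConvexOn ℝ (Set.Ioi (0 : ℝ)) (fun l1 : ℝ =>
          Real.exp (k / 3 * ((Real.log l1 - Real.log l2) ^ 2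
            + (Real.log l2 - Real.log l3) ^ 2 + (Real.log l3 - Real.log l1) ^ 2)))) ∧
     (∀ l1 l3 : ℝ, 0 < l1 → 0 < l3 →
        ConvexOn ℝ (Set.Ioi (0 : ℝ)) (fun l2 : ℝ =>
          Real.exp (k / 3 * ((Real.log l1 - Real.log l2) ^ 2
            + (Real.log l2 - Real.log l3) ^ 2 + (Real.log l3 - Real.log l1) ^ 2)))) ∧
     (∀ l1 l2 : ℝ, 0 < l1 → 0 < l2 →
        ConvexOn ℝ (Set.Ioi (0 : ℝ)) (fun l3 : ℝ =>
          Real.exp (k / 3 * ((Real.log l1 - Real.log l2) ^ 2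
            + (Real.log l2 - Real.log l3) ^ 2 + (Real.log l3 - Real.log l1) ^ 2))))) ↔
    3 / 16 ≤ k := by
  constructor
  · rintro ⟨h1, -, -⟩
    have hc := h1 1 1 one_pos one_pos
    have hc' : ConvexOn ℝ (Set.Ioi (0:ℝ)) (fun l : ℝ =>
        Real.exp ((2*k/3) * (Real.log l)^2 + 0 * Real.log l + 0)) := by
      convert hc using 2 with l
      simp [Real.log_one]
      ring
    have := key_nec (2*k/3) 0 0 (by linarith) hc'
    linarith
  · intro h316
    refine ⟨fun l2 l3 _ _ => ?_, fun l1 l3 _ _ => ?_, fun l1 l2 _ _ => ?_⟩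
    · exact convexCase k (Real.log l2) (Real.log l3) h316
    · convert convexCase k (Real.log l3) (Real.log l1) h316 using 2 with l
      ring
    · convert convexCase k (Real.log l2) (Real.log l1) h316 using 2 with l
      ring
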